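/- Combining the previous two results: if C(t) = F(t)ᵀF(t) with Ḟ = A(t)F, λ_max(C(t*)) is a simple eigenvalue with unit eigenvector e_max, then ∂_t λ_max(C(t))|_{t=t*} = 2⟨F(t*)e_max, S(t*)F(t*)e_max⟩ with S = ½(A + Aᵀ). In particular, ∂_t λ_max(C(t*)) ≠ 0 if and only if ⟨F(t*)e_max, S(t*)F(t*)e_max⟩ ≠ 0. -/

import Mathlib

open Matrix

/-- If C(t) = F(t)ᵀF(t) with Ḟ = A(t)F, and λ(t) = λ_max(C(t)) is a simple
eigenvalue with C¹ family of unit eigenvectors e(t), then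
∂_t λ(t)|_{t=t*} = 2⟨F(t*)e(t*), S(t*)F(t*)e(t*)⟩ with S = ½(A + Aᵀ); in particular
∂_t λ(t*) ≠ 0 iff ⟨F(t*)e(t*), S(t*)F(t*)e(t*)⟩ ≠ 0. -/
theorem nondegeneracy_condition_equivalence
    {n : ℕ}
    (F A : ℝ → Matrix (Fin n) (Fin n) ℝ)
    (hFinv : ∀ t, IsUnit (F t))
    (hF : ∀ t i j, HasDerivAt (fun u => F u i j) ((A t * F t) i j) t)
    (e e' : ℝ → Fin n → ℝ)
    (he : ∀ t i, HasDerivAt (fun u => e u i) (e' t i) t)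
    (hunit : ∀ t, e t ⬝ᵥ e t = 1)
    (lam : ℝ → ℝ)
    (heig : ∀ t, ((F t)ᵀ * F t) *ᵥ e t = lam t • e t)
    (t₀ : ℝ)
    (hsimple : ∀ v : Fin n → ℝ, ((F t₀)ᵀ * F t₀) *ᵥ v = lam t₀ • v → ∃ c : ℝ, v = c • e t₀)
    (hmax : ∀ v : Fin n → ℝ, v ⬝ᵥ v = 1 → v ⬝ᵥ (((F t₀)ᵀ * F t₀) *ᵥ v) ≤ lam t₀) :
    HasDerivAt lam
      (2 * ((F t₀ *ᵥ e t₀) ⬝ᵥ ((((1 / 2 : ℝ) • (A t₀ + (A t₀)ᵀ))) *ᵥ (F t₀ *ᵥ e t₀)))) t₀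
    ∧ (deriv lam t₀ ≠ 0 ↔
        (F t₀ *ᵥ e t₀) ⬝ᵥ ((((1 / 2 : ℝ) • (A t₀ + (A t₀)ᵀ))) *ᵥ (F t₀ *ᵥ e t₀)) ≠ 0) := by
  classical
  set v : ℝ → Fin n → ℝ := fun t => F t *ᵥ e t with hvdef
  set s : ℝ := (F t₀ *ᵥ e t₀) ⬝ᵥ ((((1 / 2 : ℝ) • (A t₀ + (A t₀)ᵀ))) *ᵥ (F t₀ *ᵥ e t₀)) with hsdef
  -- lam t = v t ⬝ᵥ v t
  have hlam : lam = fun t => v t ⬝ᵥ v t := by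
    funext t
    have h1 : e t ⬝ᵥ (((F t)ᵀ * F t) *ᵥ e t) = lam t := by
      rw [heig t, dotProduct_smul, hunit t, smul_eq_mul, mul_one]
    have h2 : e t ⬝ᵥ (((F t)ᵀ * F t) *ᵥ e t) = v t ⬝ᵥ v t := by
      rw [← mulVec_mulVec, dotProduct_mulVec, vecMul_transpose]
    rw [← h1, h2]
  -- orthogonality e ⬝ e' = 0 at t₀
  have horth : e t₀ ⬝ᵥ e' t₀ = 0 := by
    have h1 : HasDerivAt (fun u => e u ⬝ᵥ e u)
        (∑ i, (e' t₀ i * e t₀ i + e t₀ i * e' t₀ i)) t₀ :=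
      HasDerivAt.fun_sum (fun i _ => (he t₀ i).mul (he t₀ i))
    have h2 : HasDerivAt (fun u => e u ⬝ᵥ e u) 0 t₀ := by
      have heq : (fun u => e u ⬝ᵥ e u) = fun _ => (1:ℝ) := funext hunit
      rw [heq]; exact hasDerivAt_const _ _
    have h3 : (∑ i, (e' t₀ i * e t₀ i + e t₀ i * e' t₀ i)) = 0 := h1.unique h2
    have h4 : (2:ℝ) * (e t₀ ⬝ᵥ e' t₀)
        = ∑ i, (e' t₀ i * e t₀ i + e t₀ i * e' t₀ i) := by
      rw [dotProduct, Finset.mul_sum]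
      exact Finset.sum_congr rfl fun i _ => by ring
    have := h4.trans h3
    linarith
  -- derivative of v
  have hvderiv : ∀ i, HasDerivAt (fun u => v u i)
      ((A t₀ *ᵥ v t₀) i + (F t₀ *ᵥ e' t₀) i) t₀ := by
    intro i
    have h1 : HasDerivAt (fun u => ∑ j, F u i j * e u j)
        (∑ j, ((A t₀ * F t₀) i j * e t₀ j + F t₀ i j * e' t₀ j)) t₀ :=
      HasDerivAt.fun_sum (fun j _ => (hF t₀ i j).mul (he t₀ j))
    have h2 : (∑ j, ((A t₀ * F t₀) i j * e t₀ j + F t₀ i j * e' t₀ j))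
        = (A t₀ *ᵥ v t₀) i + (F t₀ *ᵥ e' t₀) i := by
      rw [Finset.sum_add_distrib]
      congr 1
      show _ = (A t₀ *ᵥ (F t₀ *ᵥ e t₀)) i
      rw [mulVec_mulVec]; rfl
    exact h2 ▸ h1
  -- main derivative
  have hD : HasDerivAt lam
      (∑ i, (((A t₀ *ᵥ v t₀) i + (F t₀ *ᵥ e' t₀) i) * v t₀ i
        + v t₀ i * ((A t₀ *ᵥ v t₀) i + (F t₀ *ᵥ e' t₀) i))) t₀ := by
    rw [hlam]
    exact HasDerivAt.fun_sum (fun i _ => (hvderiv i).mul (hvderiv i))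
  -- simplify the derivative value
  have hzero : v t₀ ⬝ᵥ (F t₀ *ᵥ e' t₀) = 0 := by
    rw [dotProduct_mulVec]
    have h1 : v t₀ ᵥ* F t₀ = lam t₀ • e t₀ := by
      rw [hvdef, ← mulVec_transpose, mulVec_mulVec, heig t₀]
    rw [h1, smul_dotProduct, horth, smul_eq_mul, mul_zero]
  have hAv : v t₀ ⬝ᵥ (A t₀ *ᵥ v t₀) = s := by
    have htr : v t₀ ⬝ᵥ ((A t₀)ᵀ *ᵥ v t₀) = v t₀ ⬝ᵥ (A t₀ *ᵥ v t₀) := by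
      rw [dotProduct_mulVec, vecMul_transpose, dotProduct_comm]
    rw [hsdef]
    show v t₀ ⬝ᵥ _ = _
    rw [smul_mulVec, dotProduct_smul, add_mulVec, dotProduct_add, htr]
    show _ = (1/2 : ℝ) * _
    ring
  have hsum : (∑ i, (((A t₀ *ᵥ v t₀) i + (F t₀ *ᵥ e' t₀) i) * v t₀ i
        + v t₀ i * ((A t₀ *ᵥ v t₀) i + (F t₀ *ᵥ e' t₀) i)))
      = 2 * s := by
    have h1 : (∑ i, (((A t₀ *ᵥ v t₀) i + (F t₀ *ᵥ e' t₀) i) * v t₀ i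
        + v t₀ i * ((A t₀ *ᵥ v t₀) i + (F t₀ *ᵥ e' t₀) i)))
        = 2 * (v t₀ ⬝ᵥ (A t₀ *ᵥ v t₀)) + 2 * (v t₀ ⬝ᵥ (F t₀ *ᵥ e' t₀)) := by
      rw [dotProduct, dotProduct, Finset.mul_sum, Finset.mul_sum, ← Finset.sum_add_distrib]
      exact Finset.sum_congr rfl fun i _ => by ring
    rw [h1, hzero, hAv]; ring
  rw [hsum] at hD
  refine ⟨hD, ?_⟩
  rw [hD.deriv]
  constructor
  · intro h hs; apply h; rw [hs]; ring
  · intro h h2; exact h (by linarith)
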